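/- Let (a_k) be real numbers with |a_k| ≤ ε_k where Σ ε_k < ∞, and define sequences (φ_k) of functions on a set X by φ_{k+1} = φ_k + a_k pointwise perturbations satisfying ‖φ_{k+1} - φ_∞‖_∞ ≤ ((k-1)/k)‖φ_k - φ_∞‖_∞ + c/k². Then ‖φ_k - φ_∞‖_∞ → 0 and in fact ‖φ_k - φ_∞‖_∞ = O((log k)/k). -/

import Mathlib

open Real

theorem stmt_15 {X : Type*} [Nonempty X]
    (φ : ℕ → X → ℝ) (φinf : X → ℝ) (e : ℕ → ℝ)
    -- `e k` is the sup norm `‖φ_k - φ_∞‖_∞`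
    (he : ∀ k, IsLUB {r : ℝ | ∃ x : X, r = |φ k x - φinf x|} (e k))
    (c C₀ : ℝ) (hc : 0 < c)
    (hinit : e 1 ≤ C₀)
    (hrec : ∀ k : ℕ, 1 ≤ k →
      e (k + 1) ≤ ((k : ℝ) - 1) / k * e k + c / (k : ℝ) ^ 2) :
    ∃ M : ℝ, 0 < M ∧ ∀ k : ℕ, 2 ≤ k → ∀ x : X,
      |φ k x - φinf x| ≤ M * (1 + Real.log k) / k := by
  refine ⟨4 * c, by linarith, ?_⟩
  have key : ∀ k : ℕ, 2 ≤ k → e k ≤ 4 * c * (1 + Real.log k) / k := by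
    intro k hk
    induction k, hk using Nat.le_induction with
    | base =>
      have h2 : e 2 ≤ c := by
        have := hrec 1 le_rfl
        norm_num at this
        linarith
      have hl2 : 0 < Real.log 2 := Real.log_pos (by norm_num)
      have : (4 : ℝ) * c * (1 + Real.log 2) / 2 ≥ 2 * c := by nlinarith
      push_cast
      linarith
    | succ k hk ih =>
      have hn : (2 : ℝ) ≤ (k : ℝ) := by exact_mod_cast hk
      set n : ℝ := (k : ℝ) with hn_def
      have hnpos : (0 : ℝ) < n := by linarith
      have hLpos : 0 < Real.log n :=
        Real.log_pos (by linarith)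
      -- log (n+1) ≥ log n + 1/(n+1)
      have hlog : Real.log n + 1 / (n + 1) ≤ Real.log (n + 1) := by
        have h1 : Real.log (n / (n + 1)) ≤ n / (n + 1) - 1 :=
          Real.log_le_sub_one_of_pos (by positivity)
        have h2 : Real.log (n / (n + 1)) = Real.log n - Real.log (n + 1) :=
          Real.log_div (by positivity) (by positivity)
        have h3 : n / (n + 1) - 1 = -(1 / (n + 1)) := by
          field_simp; ring
        rw [h2, h3] at h1
        linarith
      have hrk := hrec k (by omega)
      rw [← hn_def] at hrk
      have step1 : (n - 1) / n * e k ≤ (n - 1) / n * (4 * c * (1 + Real.log n) / n) := by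
        apply mul_le_mul_of_nonneg_left ih
        apply div_nonneg <;> linarith
      have step2 : (n - 1) / n * (4 * c * (1 + Real.log n) / n) + c / n ^ 2
          ≤ 4 * c * (1 + Real.log n) / (n + 1) + 4 * c / (n + 1) ^ 2 := by
        rw [show (n - 1) / n * (4 * c * (1 + Real.log n) / n) + c / n ^ 2
              = ((n - 1) * (4 * c * (1 + Real.log n)) + c) / n ^ 2 by
            field_simp,
          show 4 * c * (1 + Real.log n) / (n + 1) + 4 * c / (n + 1) ^ 2
              = (4 * c * (1 + Real.log n) * (n + 1) + 4 * c) / (n + 1) ^ 2 by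
            field_simp,
          div_le_div_iff₀ (by positivity) (by positivity)]
        nlinarith [mul_pos hc hLpos, sq_nonneg (n - 1), mul_pos (mul_pos hc hLpos) hnpos]
      have step3 : 4 * c * (1 + Real.log n) / (n + 1) + 4 * c / (n + 1) ^ 2
          ≤ 4 * c * (1 + Real.log (n + 1)) / (n + 1) := by
        have h4 : 4 * c / (n + 1) ^ 2 ≤ 4 * c * (Real.log (n + 1) - Real.log n) / (n + 1) := by
          rw [show 4 * c / (n + 1) ^ 2 = 4 * c * (1 / (n + 1)) / (n + 1) by
            field_simp]
          gcongr <;> linarith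
        have h5 : 4 * c * (1 + Real.log (n + 1)) / (n + 1)
            = 4 * c * (1 + Real.log n) / (n + 1)
              + 4 * c * (Real.log (n + 1) - Real.log n) / (n + 1) := by ring
        linarith
      have goal' : e (k + 1) ≤ 4 * c * (1 + Real.log (n + 1)) / (n + 1) := by
        calc e (k + 1) ≤ (n - 1) / n * e k + c / n ^ 2 := hrk
          _ ≤ (n - 1) / n * (4 * c * (1 + Real.log n) / n) + c / n ^ 2 := by linarith
          _ ≤ 4 * c * (1 + Real.log n) / (n + 1) + 4 * c / (n + 1) ^ 2 := step2
          _ ≤ 4 * c * (1 + Real.log (n + 1)) / (n + 1) := step3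
      push_cast
      exact goal'
  intro k hk x
  have hub : |φ k x - φinf x| ≤ e k := (he k).1 ⟨x, rfl⟩
  exact hub.trans (key k hk)
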